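/- Let xi ~ N(0, I_m), w(xi) := sum_{i=1}^m (xi_i^2-1)^2, and let M be a symmetric m-by-m real matrix. Then E[w(xi) * (xi^T M xi)^2] = (4m + 32) * tr(M^2) + (2m + 16) * (tr M)^2 + 24 * sum_{i=1}^m M_{ii}^2. -/

import Mathlib

open MeasureTheory ProbabilityTheory Matrix

section Stmt5Aux

open Real Filter Topology

noncomputable section

namespace Stmt5Aux

/-- Gaussian kernel. -/
def gE (x : ℝ) : ℝ := Real.exp (-(1/2) * x ^ 2)

lemma intLeb (n : ℕ) : Integrable fun x : ℝ => x ^ n * gE x := by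
  have hs : (-1 : ℝ) < (n : ℝ) := lt_of_lt_of_le neg_one_lt_zero (Nat.cast_nonneg n)
  have := integrable_rpow_mul_exp_neg_mul_sq (b := (1:ℝ)/2) (by norm_num) hs
  simpa [gE, Real.rpow_natCast] using this

lemma derivE (x : ℝ) : HasDerivAt (fun y : ℝ => -gE y) (x * gE x) x := by
  have h1 : HasDerivAt (fun y : ℝ => -(1/2) * y ^ 2) (-(1/2) * (2 * x ^ 1)) x :=
    (hasDerivAt_pow 2 x).const_mul (-(1/2))
  have h2 : HasDerivAt (fun y : ℝ => -gE y) (-(Real.exp (-(1/2) * x ^ 2) * (-(1/2) * (2 * x ^ 1)))) x := (h1.exp).neg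
  convert h2 using 1
  simp [gE]; ring

lemma tendE_top : Tendsto (fun x : ℝ => -gE x) atTop (𝓝 0) := by
  have h1 : Tendsto (fun x : ℝ => (1/2) * x ^ 2) atTop atTop :=
    (tendsto_pow_atTop (n := 2) (by norm_num)).const_mul_atTop (by norm_num)
  have h2 : Tendsto (fun x : ℝ => -(1/2) * x ^ 2) atTop atBot := by
    refine (tendsto_neg_atTop_atBot.comp h1).congr fun x => ?_
    simp only [Function.comp_apply]; ring
  have := (Real.tendsto_exp_atBot.comp h2).neg
  simpa [gE, Function.comp_def] using this

lemma tendE_bot : Tendsto (fun x : ℝ => -gE x) atBot (𝓝 0) := by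
  have h0 : Tendsto (fun x : ℝ => x ^ 2) atBot atTop := by
    refine (((tendsto_pow_atTop (α := ℝ) (n := 2) (by norm_num))).comp
      (tendsto_neg_atBot_atTop (G := ℝ))).congr fun x => ?_
    simp only [Function.comp_apply]; ring
  have h1 : Tendsto (fun x : ℝ => (1/2) * x ^ 2) atBot atTop := h0.const_mul_atTop (by norm_num)
  have h2 : Tendsto (fun x : ℝ => -(1/2) * x ^ 2) atBot atBot := by
    refine (tendsto_neg_atTop_atBot.comp h1).congr fun x => ?_
    simp only [Function.comp_apply]; ring
  have := (Real.tendsto_exp_atBot.comp h2).neg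
  simpa [gE, Function.comp_def] using this

lemma GL1 : ∫ x : ℝ, x ^ 1 * gE x = 0 := by
  have h := integral_of_hasDerivAt_of_tendsto (f := fun x : ℝ => -gE x)
    (f' := fun x : ℝ => x * gE x) derivE (by simpa [pow_one] using intLeb 1) tendE_bot tendE_top
  simpa [pow_one] using h

lemma GLrec (n : ℕ) : ∫ x : ℝ, x ^ (n + 2) * gE x = (n + 1 : ℝ) * ∫ x : ℝ, x ^ n * gE x := by
  have hu : ∀ x : ℝ, HasDerivAt (fun y : ℝ => y ^ (n + 1)) (((n:ℝ) + 1) * x ^ n) x := by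
    intro x
    have := hasDerivAt_pow (n + 1) x
    norm_num at this
    convert this using 2
  have h1 : Integrable ((fun x : ℝ => x ^ (n+1)) * fun x : ℝ => x * gE x) := by
    have : ((fun x : ℝ => x ^ (n+1)) * fun x : ℝ => x * gE x) = fun x : ℝ => x ^ (n+2) * gE x := by
      funext x; simp only [Pi.mul_apply]; ring
    rw [this]; exact intLeb (n+2)
  have h2 : Integrable ((fun x : ℝ => ((n:ℝ) + 1) * x ^ n) * fun x : ℝ => -gE x) := by
    have : ((fun x : ℝ => ((n:ℝ)+1) * x ^ n) * fun x : ℝ => -gE x)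
        = fun x : ℝ => (-((n:ℝ)+1)) * (x ^ n * gE x) := by
      funext x; simp only [Pi.mul_apply]; ring
    rw [this]; exact (intLeb n).const_mul _
  have h3 : Integrable ((fun x : ℝ => x ^ (n+1)) * fun x : ℝ => -gE x) := by
    have : ((fun x : ℝ => x ^ (n+1)) * fun x : ℝ => -gE x)
        = fun x : ℝ => (-1 : ℝ) * (x ^ (n+1) * gE x) := by
      funext x; simp only [Pi.mul_apply]; ring
    rw [this]; exact (intLeb (n+1)).const_mul _
  have key := integral_mul_deriv_eq_deriv_mul_of_integrable
    (u := fun x : ℝ => x ^ (n+1)) (v := fun x : ℝ => -gE x)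
    (u' := fun x : ℝ => ((n:ℝ) + 1) * x ^ n) (v' := fun x : ℝ => x * gE x)
    (fun x _ => hu x) (fun x _ => derivE x) h1 h2 h3
  calc ∫ x : ℝ, x ^ (n+2) * gE x = ∫ x : ℝ, (x ^ (n+1)) * (x * gE x) := by
        congr 1; funext x; ring
    _ = - ∫ x : ℝ, (((n:ℝ) + 1) * x ^ n) * (-gE x) := key
    _ = (n + 1 : ℝ) * ∫ x : ℝ, x ^ n * gE x := by
        rw [← integral_neg, ← integral_const_mul]
        congr 1; funext x; ring

lemma pdf_eq : gaussianPDFReal 0 1 = fun x => (Real.sqrt (2 * π))⁻¹ * gE x := by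
  funext x
  simp only [gaussianPDFReal, gE, NNReal.coe_one, mul_one, sub_zero]
  congr 1
  ring

lemma meas_toNN : Measurable fun x => (gaussianPDFReal 0 1 x).toNNReal :=
  (measurable_gaussianPDFReal 0 1).real_toNNReal

lemma gauss_eq_wd : gaussianReal 0 1
    = (volume : Measure ℝ).withDensity (fun x => ((gaussianPDFReal 0 1 x).toNNReal : ENNReal)) := by
  rw [gaussianReal_of_var_ne_zero 0 one_ne_zero]
  rfl

lemma convγ (g : ℝ → ℝ) :
    ∫ x, g x ∂(gaussianReal 0 1) = (Real.sqrt (2 * π))⁻¹ * ∫ x, g x * gE x := by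
  rw [gauss_eq_wd, integral_withDensity_eq_integral_smul meas_toNN]
  rw [← integral_const_mul]
  congr 1
  funext x
  rw [NNReal.smul_def, smul_eq_mul, Real.coe_toNNReal _ (gaussianPDFReal_nonneg 0 1 x), pdf_eq]
  ring

lemma convγ_int (g : ℝ → ℝ) (h : Integrable (fun x => g x * gE x)) :
    Integrable g (gaussianReal 0 1) := by
  rw [gauss_eq_wd, integrable_withDensity_iff_integrable_smul meas_toNN]
  have : (fun x => (gaussianPDFReal 0 1 x).toNNReal • g x)
      = fun x => (Real.sqrt (2 * π))⁻¹ * (g x * gE x) := by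
    funext x
    rw [NNReal.smul_def, smul_eq_mul, Real.coe_toNNReal _ (gaussianPDFReal_nonneg 0 1 x), pdf_eq]
    ring
  rw [this]
  exact h.const_mul _

lemma intγ_pow (n : ℕ) : Integrable (fun x : ℝ => x ^ n) (gaussianReal 0 1) :=
  convγ_int _ (intLeb n)

lemma intγ_w (n : ℕ) : Integrable (fun x : ℝ => (x ^ 2 - 1) ^ 2 * x ^ n) (gaussianReal 0 1) := by
  have h : (fun x : ℝ => (x ^ 2 - 1) ^ 2 * x ^ n)
      = fun x => (x ^ (n+4) - 2 * x ^ (n+2)) + x ^ n := by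
    funext x; ring
  rw [h]
  exact ((intγ_pow (n+4)).sub ((intγ_pow (n+2)).const_mul 2)).add (intγ_pow n)

/-- moments of the standard gaussian -/
def momγ (n : ℕ) : ℝ := ∫ x, x ^ n ∂(gaussianReal 0 1)

lemma momγ_zero : momγ 0 = 1 := by
  simp [momγ]

lemma momγ_one : momγ 1 = 0 := by
  rw [momγ, convγ, GL1, mul_zero]

lemma momγ_rec (n : ℕ) : momγ (n + 2) = (n + 1 : ℝ) * momγ n := by
  simp only [momγ, convγ, GLrec]
  ring

lemma momγ_2 : momγ 2 = 1 := by rw [show 2 = 0 + 2 from rfl, momγ_rec, momγ_zero]; norm_num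
lemma momγ_3 : momγ 3 = 0 := by rw [show 3 = 1 + 2 from rfl, momγ_rec, momγ_one]; norm_num
lemma momγ_4 : momγ 4 = 3 := by rw [show 4 = 2 + 2 from rfl, momγ_rec, momγ_2]; norm_num
lemma momγ_5 : momγ 5 = 0 := by rw [show 5 = 3 + 2 from rfl, momγ_rec, momγ_3]; norm_num
lemma momγ_6 : momγ 6 = 15 := by rw [show 6 = 4 + 2 from rfl, momγ_rec, momγ_4]; norm_num
lemma momγ_7 : momγ 7 = 0 := by rw [show 7 = 5 + 2 from rfl, momγ_rec, momγ_5]; norm_num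
lemma momγ_8 : momγ 8 = 105 := by rw [show 8 = 6 + 2 from rfl, momγ_rec, momγ_6]; norm_num

/-- value table for plain moments, `n ≤ 4` -/
def vμ (n : ℕ) : ℝ := if n = 0 then 1 else if n = 2 then 1 else if n = 4 then 3 else 0

/-- value table for `∫ (x²-1)² xⁿ`, `n ≤ 4` -/
def vφ (n : ℕ) : ℝ := if n = 0 then 2 else if n = 2 then 10 else if n = 4 then 78 else 0

lemma momγ_val (n : ℕ) (hn : n ≤ 4) : ∫ x, x ^ n ∂(gaussianReal 0 1) = vμ n := by
  interval_cases n
  · exact momγ_zero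
  · exact momγ_one
  · exact momγ_2
  · exact momγ_3
  · exact momγ_4

lemma wmomγ_eq (n : ℕ) : ∫ x, (x ^ 2 - 1) ^ 2 * x ^ n ∂(gaussianReal 0 1)
    = momγ (n + 4) - 2 * momγ (n + 2) + momγ n := by
  have h : (fun x : ℝ => (x ^ 2 - 1) ^ 2 * x ^ n)
      = fun x => (x ^ (n+4) - 2 * x ^ (n+2)) + x ^ n := by
    funext x; ring
  have hA : Integrable (fun x : ℝ => x ^ (n+4) - 2 * x ^ (n+2)) (gaussianReal 0 1) :=
    (intγ_pow (n+4)).sub ((intγ_pow (n+2)).const_mul 2)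
  rw [h, integral_add hA (intγ_pow n),
    integral_sub (intγ_pow (n+4)) ((intγ_pow (n+2)).const_mul 2), integral_const_mul]
  rfl

lemma wmomγ_val (n : ℕ) (hn : n ≤ 4) :
    ∫ x, (x ^ 2 - 1) ^ 2 * x ^ n ∂(gaussianReal 0 1) = vφ n := by
  interval_cases n <;>
    rw [wmomγ_eq] <;>
    simp [momγ_zero, momγ_one, momγ_2, momγ_3, momγ_4, momγ_5, momγ_6, momγ_7, momγ_8, vφ] <;>
    norm_num

variable {m : ℕ}

/-- exponent pattern -/
def eex (i j k l t : Fin m) : ℕ :=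
  (if i = t then 1 else 0) + (if j = t then 1 else 0) + (if k = t then 1 else 0)
    + (if l = t then 1 else 0)

lemma eex_le (i j k l t : Fin m) : eex i j k l t ≤ 4 := by
  unfold eex; split_ifs <;> norm_num

/-- per-coordinate integral value -/
def df (a t : Fin m) (n : ℕ) : ℝ := if t = a then vφ n else vμ n

/-- normalized per-coordinate value -/
def wf (a t : Fin m) (n : ℕ) : ℝ := if t = a then vφ n / 2 else vμ n

def sf (a t : Fin m) : ℝ := if t = a then 5 else 1
def kf (a t : Fin m) : ℝ := if t = a then 39 else 3

lemma sf_split (a t : Fin m) : sf a t = 1 + (if t = a then (4:ℝ) else 0) := by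
  unfold sf; split_ifs <;> norm_num

lemma kks_split (a t : Fin m) :
    kf a t - 3 * sf a t ^ 2 = if t = a then (-36:ℝ) else 0 := by
  unfold kf sf; split_ifs <;> norm_num

lemma df_eq (a t : Fin m) (n : ℕ) : df a t n = (if t = a then (2:ℝ) else 1) * wf a t n := by
  by_cases h : t = a <;> simp [df, wf, h] <;> ring

lemma wf0 (a t : Fin m) : wf a t 0 = 1 := by
  by_cases h : t = a <;> simp [wf, vφ, vμ, h] <;> norm_num
lemma wf1 (a t : Fin m) : wf a t 1 = 0 := by by_cases h : t = a <;> simp [wf, vφ, vμ, h]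
lemma wf2 (a t : Fin m) : wf a t 2 = sf a t := by
  by_cases h : t = a <;> simp [wf, sf, vφ, vμ, h] <;> norm_num
lemma wf4 (a t : Fin m) : wf a t 4 = kf a t := by
  by_cases h : t = a <;> simp [wf, kf, vφ, vμ, h] <;> norm_num

/-- the Wick formula expression -/
def fml (a i j k l : Fin m) : ℝ :=
  (if i = j then (1:ℝ) else 0) * ((if k = l then (1:ℝ) else 0) * (sf a i * sf a k))
  + (if i = k then (1:ℝ) else 0) * ((if j = l then (1:ℝ) else 0) * (sf a i * sf a j))
  + (if i = l then (1:ℝ) else 0) * ((if j = k then (1:ℝ) else 0) * (sf a i * sf a j))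
  + (if i = j ∧ j = k ∧ k = l then (1:ℝ) else 0) * (kf a i - 3 * sf a i ^ 2)

lemma keyProd (a i j k l : Fin m) :
    (∏ t, df a t (eex i j k l t)) = 2 * fml a i j k l := by
  have hd : (∏ t, df a t (eex i j k l t))
      = (∏ t : Fin m, (if t = a then (2:ℝ) else 1)) * ∏ t, wf a t (eex i j k l t) := by
    rw [← Finset.prod_mul_distrib]
    exact Finset.prod_congr rfl fun t _ => df_eq a t _
  have hmass : (∏ t : Fin m, (if t = a then (2:ℝ) else 1)) = 2 := by
    simp [Finset.prod_ite_eq']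
  rw [hd, hmass]
  congr 1
  by_cases hij : i = j
  · subst hij
    by_cases hik : i = k
    · subst hik
      by_cases hil : i = l
      · subst hil
        have hprod : (∏ t, wf a t (eex i i i i t)) = wf a i (eex i i i i i) := by
          refine (Finset.prod_subset (Finset.subset_univ {i}) fun t _ ht => ?_).symm.trans
            (Finset.prod_singleton _ _)
          have h1 : ¬ i = t := fun h => ht (by simp [h])
          simp [eex, h1, wf0]
        rw [hprod]
        have he : eex i i i i i = 4 := by simp [eex]
        rw [he, wf4]
        simp [fml]
        ring
      · have h0 : wf a l (eex i i i l l) = 0 := by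
          have : eex i i i l l = 1 := by simp [eex, hil]
          rw [this, wf1]
        rw [Finset.prod_eq_zero (Finset.mem_univ l) h0]
        simp [fml, hil]
    · by_cases hil : i = l
      · subst hil
        have hki : ¬ k = i := fun h => hik h.symm
        have h0 : wf a k (eex i i k i k) = 0 := by
          have : eex i i k i k = 1 := by simp [eex, hik]
          rw [this, wf1]
        rw [Finset.prod_eq_zero (Finset.mem_univ k) h0]
        simp [fml, hik, hki]
      · by_cases hkl : k = l
        · subst hkl
          have hki : ¬ k = i := fun h => hik h.symm
          have hprod : (∏ t, wf a t (eex i i k k t))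
              = wf a i (eex i i k k i) * wf a k (eex i i k k k) := by
            refine (Finset.prod_subset (Finset.subset_univ {i, k}) fun t _ ht => ?_).symm.trans
              (Finset.prod_pair hik)
            simp only [Finset.mem_insert, Finset.mem_singleton, not_or] at ht
            have h1 : ¬ i = t := fun h => ht.1 h.symm
            have h2 : ¬ k = t := fun h => ht.2 h.symm
            simp [eex, h1, h2, wf0]
          rw [hprod]
          have he1 : eex i i k k i = 2 := by simp [eex, hki]
          have he2 : eex i i k k k = 2 := by simp [eex, hik]
          rw [he1, he2, wf2, wf2]
          simp [fml, hik]
        · have h0 : wf a k (eex i i k l k) = 0 := by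
            have hlk : ¬ l = k := fun h => hkl h.symm
            have : eex i i k l k = 1 := by simp [eex, hik, hlk]
            rw [this, wf1]
          rw [Finset.prod_eq_zero (Finset.mem_univ k) h0]
          simp [fml, hik, hil, hkl]
  · by_cases hik : i = k
    · subst hik
      by_cases hjl : j = l
      · subst hjl
        have hji : ¬ j = i := fun h => hij h.symm
        have hprod : (∏ t, wf a t (eex i j i j t))
            = wf a i (eex i j i j i) * wf a j (eex i j i j j) := by
          refine (Finset.prod_subset (Finset.subset_univ {i, j}) fun t _ ht => ?_).symm.trans
            (Finset.prod_pair hij)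
          simp only [Finset.mem_insert, Finset.mem_singleton, not_or] at ht
          have h1 : ¬ i = t := fun h => ht.1 h.symm
          have h2 : ¬ j = t := fun h => ht.2 h.symm
          simp [eex, h1, h2, wf0]
        rw [hprod]
        have he1 : eex i j i j i = 2 := by simp [eex, hji]
        have he2 : eex i j i j j = 2 := by simp [eex, hij]
        rw [he1, he2, wf2, wf2]
        simp [fml, hij]
      · have hlj : ¬ l = j := fun h => hjl h.symm
        have hij' : ¬ i = j := hij
        have h0 : wf a j (eex i j i l j) = 0 := by
          have : eex i j i l j = 1 := by simp [eex, hij', hlj]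
          rw [this, wf1]
        have hji : ¬ j = i := fun h => hij h.symm
        rw [Finset.prod_eq_zero (Finset.mem_univ j) h0]
        simp [fml, hij, hjl, hji]
    · by_cases hil : i = l
      · subst hil
        by_cases hjk : j = k
        · subst hjk
          have hji : ¬ j = i := fun h => hij h.symm
          have hprod : (∏ t, wf a t (eex i j j i t))
              = wf a i (eex i j j i i) * wf a j (eex i j j i j) := by
            refine (Finset.prod_subset (Finset.subset_univ {i, j}) fun t _ ht => ?_).symm.trans
              (Finset.prod_pair hij)
            simp only [Finset.mem_insert, Finset.mem_singleton, not_or] at ht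
            have h1 : ¬ i = t := fun h => ht.1 h.symm
            have h2 : ¬ j = t := fun h => ht.2 h.symm
            simp [eex, h1, h2, wf0]
          rw [hprod]
          have he1 : eex i j j i i = 2 := by simp [eex, hji]
          have he2 : eex i j j i j = 2 := by simp [eex, hij]
          rw [he1, he2, wf2, wf2]
          simp [fml, hij, hji]
        · have hkj : ¬ k = j := fun h => hjk h.symm
          have hij' : ¬ i = j := hij
          have h0 : wf a j (eex i j k i j) = 0 := by
            have : eex i j k i j = 1 := by simp [eex, hij', hkj]
            rw [this, wf1]
          have hji : ¬ j = i := fun h => hij h.symm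
          rw [Finset.prod_eq_zero (Finset.mem_univ j) h0]
          simp [fml, hij, hjk, hji]
      · have hji : ¬ j = i := fun h => hij h.symm
        have hki : ¬ k = i := fun h => hik h.symm
        have hli : ¬ l = i := fun h => hil h.symm
        have h0 : wf a i (eex i j k l i) = 0 := by
          have : eex i j k l i = 1 := by simp [eex, hji, hki, hli]
          rw [this, wf1]
        rw [Finset.prod_eq_zero (Finset.mem_univ i) h0]
        simp [fml, hij, hik, hil]

lemma pi_prod_integral (f : Fin m → ℝ → ℝ) :
    ∫ x : Fin m → ℝ, ∏ i, f i (x i) ∂(Measure.pi fun _ => gaussianReal 0 1)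
      = ∏ i, ∫ x, f i x ∂(gaussianReal 0 1) := by
  letI : MeasureSpace ℝ := ⟨gaussianReal 0 1⟩
  haveI : SigmaFinite (volume : Measure ℝ) := by
    show SigmaFinite (gaussianReal 0 1); infer_instance
  exact MeasureTheory.integral_fintype_prod_eq_prod (ι := Fin m) f

lemma pi_prod_integrable (f : Fin m → ℝ → ℝ)
    (hf : ∀ i, Integrable (f i) (gaussianReal 0 1)) :
    Integrable (fun x : Fin m → ℝ => ∏ i, f i (x i))
      (Measure.pi fun _ => gaussianReal 0 1) := by
  letI : MeasureSpace ℝ := ⟨gaussianReal 0 1⟩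
  haveI : SigmaFinite (volume : Measure ℝ) := by
    show SigmaFinite (gaussianReal 0 1); infer_instance
  exact MeasureTheory.Integrable.fintype_prod (𝕜 := ℝ) hf

def hfun (a i j k l t : Fin m) : ℝ → ℝ :=
  fun x => (if t = a then (x ^ 2 - 1) ^ 2 else 1) * x ^ (eex i j k l t)

lemma hfun_int (a i j k l t : Fin m) : Integrable (hfun a i j k l t) (gaussianReal 0 1) := by
  unfold hfun
  by_cases h : t = a
  · simp only [if_pos h]
    exact intγ_w _
  · simp only [if_neg h, one_mul]
    exact intγ_pow _

lemma hfun_integral (a i j k l t : Fin m) :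
    ∫ x, hfun a i j k l t x ∂(gaussianReal 0 1) = df a t (eex i j k l t) := by
  unfold hfun df
  by_cases h : t = a
  · simp only [if_pos h]
    exact wmomγ_val _ (eex_le i j k l t)
  · simp only [if_neg h, one_mul]
    exact momγ_val _ (eex_le i j k l t)

lemma F_eq_prod (a i j k l : Fin m) (ξ : Fin m → ℝ) :
    (ξ a ^ 2 - 1) ^ 2 * (ξ i * ξ j * ξ k * ξ l) = ∏ t, hfun a i j k l t (ξ t) := by
  unfold hfun eex
  rw [Finset.prod_mul_distrib]
  have h1 : (∏ t, (if t = a then (ξ t ^ 2 - 1) ^ 2 else 1)) = (ξ a ^ 2 - 1) ^ 2 := by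
    simp [Finset.prod_ite_eq']
  have hx : ∀ p : Fin m, (∏ t, ξ t ^ (if p = t then 1 else 0)) = ξ p := by
    intro p
    have he : ∀ t : Fin m, ξ t ^ (if p = t then 1 else 0) = (if p = t then ξ t else 1) := by
      intro t; split_ifs <;> simp
    rw [Finset.prod_congr rfl fun t _ => he t]
    simp [Finset.prod_ite_eq]
  have h2 : (∏ t, ξ t ^ ((if i = t then 1 else 0) + (if j = t then 1 else 0)
      + (if k = t then 1 else 0) + (if l = t then 1 else 0))) = ξ i * ξ j * ξ k * ξ l := by
    simp only [pow_add, Finset.prod_mul_distrib]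
    rw [hx i, hx j, hx k, hx l]
  rw [h1, h2]

lemma intF (a i j k l : Fin m) :
    Integrable (fun ξ : Fin m → ℝ => (ξ a ^ 2 - 1) ^ 2 * (ξ i * ξ j * ξ k * ξ l))
      (Measure.pi fun _ => gaussianReal 0 1) := by
  have h : (fun ξ : Fin m → ℝ => (ξ a ^ 2 - 1) ^ 2 * (ξ i * ξ j * ξ k * ξ l))
      = fun ξ => ∏ t, hfun a i j k l t (ξ t) := funext (F_eq_prod a i j k l)
  rw [h]
  exact pi_prod_integrable _ (hfun_int a i j k l)

lemma intF_val (a i j k l : Fin m) :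
    ∫ ξ : Fin m → ℝ, (ξ a ^ 2 - 1) ^ 2 * (ξ i * ξ j * ξ k * ξ l)
      ∂(Measure.pi fun _ => gaussianReal 0 1) = 2 * fml a i j k l := by
  have h : (fun ξ : Fin m → ℝ => (ξ a ^ 2 - 1) ^ 2 * (ξ i * ξ j * ξ k * ξ l))
      = fun ξ => ∏ t, hfun a i j k l t (ξ t) := funext (F_eq_prod a i j k l)
  rw [h, pi_prod_integral, Finset.prod_congr rfl fun t _ => hfun_integral a i j k l t,
    keyProd]

end Stmt5Aux

end

end Stmt5Aux

open Stmt5Aux in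
theorem stmt_5 (m : ℕ) (M : Matrix (Fin m) (Fin m) ℝ) (hM : M.IsSymm) :
    (∫ ξ : Fin m → ℝ,
        (∑ i, (ξ i ^ 2 - 1) ^ 2 : ℝ) * (ξ ⬝ᵥ M.mulVec ξ) ^ 2
        ∂(Measure.pi fun _ : Fin m => gaussianReal 0 1))
      = (4 * (m : ℝ) + 32) * (M * M).trace
        + (2 * (m : ℝ) + 16) * M.trace ^ 2
        + 24 * ∑ i, (M i i) ^ 2 := by
  classical
  have hsym : ∀ p q : Fin m, M q p = M p q := fun p q => hM.apply p q
  have step1 : ∀ ξ : Fin m → ℝ,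
      (∑ i, (ξ i ^ 2 - 1) ^ 2 : ℝ) * (ξ ⬝ᵥ M.mulVec ξ) ^ 2
      = ∑ a : Fin m, ∑ i, ∑ k, ∑ j, ∑ l,
          (M i j * M k l) * ((ξ a ^ 2 - 1) ^ 2 * (ξ i * ξ j * ξ k * ξ l)) := by
    intro ξ
    have hQ : ξ ⬝ᵥ M.mulVec ξ = ∑ i, ∑ j, ξ i * (M i j * ξ j) := by
      simp [dotProduct, Matrix.mulVec, Finset.mul_sum]
    rw [sq, hQ, Finset.sum_mul]
    refine Finset.sum_congr rfl fun a _ => ?_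
    rw [Finset.sum_mul_sum, Finset.mul_sum]
    refine Finset.sum_congr rfl fun i _ => ?_
    rw [Finset.mul_sum]
    refine Finset.sum_congr rfl fun k _ => ?_
    rw [Finset.sum_mul_sum, Finset.mul_sum]
    refine Finset.sum_congr rfl fun j _ => ?_
    rw [Finset.mul_sum]
    refine Finset.sum_congr rfl fun l _ => ?_
    ring
  have hInt : ∀ a i j k l : Fin m,
      Integrable (fun ξ : Fin m → ℝ =>
        (M i j * M k l) * ((ξ a ^ 2 - 1) ^ 2 * (ξ i * ξ j * ξ k * ξ l)))
        (Measure.pi fun _ : Fin m => gaussianReal 0 1) :=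
    fun a i j k l => (intF a i j k l).const_mul _
  calc (∫ ξ : Fin m → ℝ,
        (∑ i, (ξ i ^ 2 - 1) ^ 2 : ℝ) * (ξ ⬝ᵥ M.mulVec ξ) ^ 2
        ∂(Measure.pi fun _ : Fin m => gaussianReal 0 1))
      = ∫ ξ : Fin m → ℝ, (∑ a : Fin m, ∑ i, ∑ k, ∑ j, ∑ l,
          (M i j * M k l) * ((ξ a ^ 2 - 1) ^ 2 * (ξ i * ξ j * ξ k * ξ l)))
          ∂(Measure.pi fun _ : Fin m => gaussianReal 0 1) :=
        integral_congr_ae (Filter.Eventually.of_forall step1)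
    _ = ∑ a : Fin m, ∑ i, ∑ k, ∑ j, ∑ l, (M i j * M k l) * (2 * fml a i j k l) := by
        rw [integral_finset_sum _ (fun a _ => integrable_finset_sum _ fun i _ =>
          integrable_finset_sum _ fun k _ => integrable_finset_sum _ fun j _ =>
          integrable_finset_sum _ fun l _ => hInt a i j k l)]
        refine Finset.sum_congr rfl fun a _ => ?_
        rw [integral_finset_sum _ (fun i _ => integrable_finset_sum _ fun k _ =>
          integrable_finset_sum _ fun j _ => integrable_finset_sum _ fun l _ => hInt a i j k l)]
        refine Finset.sum_congr rfl fun i _ => ?_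
        rw [integral_finset_sum _ (fun k _ => integrable_finset_sum _ fun j _ =>
          integrable_finset_sum _ fun l _ => hInt a i j k l)]
        refine Finset.sum_congr rfl fun k _ => ?_
        rw [integral_finset_sum _ (fun j _ => integrable_finset_sum _ fun l _ => hInt a i j k l)]
        refine Finset.sum_congr rfl fun j _ => ?_
        rw [integral_finset_sum _ (fun l _ => hInt a i j k l)]
        refine Finset.sum_congr rfl fun l _ => ?_
        rw [integral_const_mul, intF_val]
    _ = ∑ a : Fin m, ((∑ i, ∑ k, M i i * M k k * sf a i * sf a k * 2)
          + (∑ i, ∑ j, M i j * M i j * 2 * sf a i * sf a j)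
          + (∑ i, ∑ j, M i j * M j i * 2 * sf a i * sf a j)
          + ∑ i, M i i * M i i * 2 * (kf a i - 3 * sf a i ^ 2)) := by
        refine Finset.sum_congr rfl fun a _ => ?_
        simp only [fml, mul_add, add_mul, mul_ite, ite_mul, zero_mul, mul_zero, one_mul, mul_one,
          ite_and, Finset.sum_add_distrib, Finset.sum_ite_eq, Finset.sum_ite_eq',
          Finset.mem_univ, if_true, Finset.sum_ite_irrel, Finset.sum_const_zero]
        ring_nf
    _ = (4 * (m : ℝ) + 32) * (∑ i, ∑ j, M i j * M j i)
          + (2 * (m : ℝ) + 16) * (∑ i, M i i) ^ 2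
          + 24 * ∑ i, M i i * M i i := by
        simp only [kks_split]
        simp only [sf_split, mul_add, add_mul, mul_ite, ite_mul, mul_zero, zero_mul,
          mul_one, one_mul,
          Finset.sum_add_distrib, Finset.sum_ite_irrel, Finset.sum_ite_eq, Finset.sum_ite_eq',
          Finset.mem_univ, if_true, Finset.sum_const_zero, ← Finset.sum_mul,
          Finset.sum_const, Finset.card_univ, Fintype.card_fin, nsmul_eq_mul]
        have hS1 : (∑ i : Fin m, (∑ i : Fin m, M i i) * M i i) = (∑ i : Fin m, M i i) ^ 2 := by
          rw [← Finset.mul_sum, sq]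
        have hU' : (∑ x : Fin m, ∑ y : Fin m, M y x * M y x)
            = ∑ x : Fin m, ∑ y : Fin m, M x y * M x y := Finset.sum_comm
        have hT' : (∑ x : Fin m, ∑ y : Fin m, M y x * M x y)
            = ∑ x : Fin m, ∑ y : Fin m, M x y * M y x := Finset.sum_comm
        have hUT : (∑ x : Fin m, ∑ y : Fin m, M x y * M x y)
            = ∑ x : Fin m, ∑ y : Fin m, M x y * M y x := by
          refine Finset.sum_congr rfl fun x _ => Finset.sum_congr rfl fun y _ => ?_
          rw [hsym x y]
        have hsq : (∑ i : Fin m, M i i) ^ 2 = ∑ x : Fin m, ∑ y : Fin m, M x x * M y y := by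
          rw [sq, Finset.sum_mul_sum]
        rw [hU', hT', hS1, hUT, hsq]
        ring
    _ = (4 * (m : ℝ) + 32) * (M * M).trace
        + (2 * (m : ℝ) + 16) * M.trace ^ 2
        + 24 * ∑ i, (M i i) ^ 2 := by
        have htr : (M * M).trace = ∑ i, ∑ j, M i j * M j i := by
          simp [Matrix.trace, Matrix.mul_apply, Matrix.diag]
        have htrM : M.trace = ∑ i, M i i := by
          simp [Matrix.trace, Matrix.diag]
        have hS2 : (∑ i, (M i i) ^ 2) = ∑ i, M i i * M i i := by
          refine Finset.sum_congr rfl fun i _ => sq (M i i) ▸ rfl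
        rw [htr, htrM, hS2]
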